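/- arXiv:1301.6236 — 3 statements merged into one kernel-verified Lean document; each statement's English description precedes it below -/
import Mathlib

section
/- If B^(0)(X,Y), …, B^(ℓ)(X,Y) is a basis of M_{s,ℓ} as an F_q[X]-module, then B^(0), …, B^(ℓ), Y^{ℓ−s+1}(Y−R(X))^s is a basis of M_{s,ℓ+1}. -/
open Polynomial

/-- The shifted polynomial Q(X+a, Y+b), where `Q : F[X][Y]` (outer variable `Y`,
inner variable `X`). -/
noncomputable def shiftXY {F : Type*} [Field F] (Q : Polynomial (Polynomial F)) (a b : F) :
    Polynomial (Polynomial F) :=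
  (Q.map ((aeval (X + C a : Polynomial F)).toRingHom : Polynomial F →+* Polynomial F)).comp
    (X + C (C b))

/-- `Q` vanishes with multiplicity at least `s` at the point `(a, b)`:
`Q(X+a, Y+b)` has no monomial `X^i Y^j` with `i + j < s`. -/
def HasMultAt {F : Type*} [Field F] (Q : Polynomial (Polynomial F)) (a b : F) (s : ℕ) : Prop :=
  ∀ i j : ℕ, i + j < s → ((shiftXY Q a b).coeff j).coeff i = 0

/-- The set (an `F[X]`-module) of bivariate polynomials of `Y`-degree at most `ℓ`
vanishing with multiplicity at least `s` at each point `(α i, r' i)`. -/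
def InterpSet {F : Type*} [Field F] {n : ℕ} (α r' : Fin n → F) (s ℓ : ℕ) :
    Set (Polynomial (Polynomial F)) :=
  {Q | Q.natDegree ≤ ℓ ∧ ∀ i, HasMultAt Q (α i) (r' i) s}

/-- The family `b` is a basis of the `F[X]`-module `M_{s,ℓ} = InterpSet α r' s ℓ`:
it is linearly independent over `F[X]` and its `F[X]`-span is exactly `M_{s,ℓ}`. -/
def IsBasisOfInterp {F : Type*} [Field F] {n : ℕ} (α r' : Fin n → F) (s ℓ : ℕ)
    {ι : Type*} (b : ι → Polynomial (Polynomial F)) : Prop :=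
  LinearIndependent (Polynomial F) b ∧
    (Submodule.span (Polynomial F) (Set.range b) : Set (Polynomial (Polynomial F))) =
      InterpSet α r' s ℓ


section Aux
variable {F : Type*} [Field F]

lemma lowV_mul {P Q : Polynomial (Polynomial F)} {a b : ℕ}
    (hP : ∀ i j, i + j < a → (P.coeff j).coeff i = 0)
    (hQ : ∀ i j, i + j < b → (Q.coeff j).coeff i = 0) :
    ∀ i j, i + j < a + b → ((P * Q).coeff j).coeff i = 0 := by
  intro i j hij
  rw [Polynomial.coeff_mul, Polynomial.finset_sum_coeff]
  apply Finset.sum_eq_zero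
  intro x hx
  rw [Polynomial.coeff_mul]
  apply Finset.sum_eq_zero
  intro y hy
  have hj := Finset.HasAntidiagonal.mem_antidiagonal.mp hx
  have hi := Finset.HasAntidiagonal.mem_antidiagonal.mp hy
  by_cases h : y.1 + x.1 < a
  · rw [hP y.1 x.1 h, zero_mul]
  · have h2 : y.2 + x.2 < b := by omega
    rw [hQ y.2 x.2 h2, mul_zero]

lemma shiftXY_mul (P Q : Polynomial (Polynomial F)) (a b : F) :
    shiftXY (P * Q) a b = shiftXY P a b * shiftXY Q a b := by
  simp [shiftXY, Polynomial.map_mul, mul_comp]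

lemma shiftXY_add (P Q : Polynomial (Polynomial F)) (a b : F) :
    shiftXY (P + Q) a b = shiftXY P a b + shiftXY Q a b := by
  simp [shiftXY, Polynomial.map_add, add_comp]

lemma shiftXY_neg (P : Polynomial (Polynomial F)) (a b : F) :
    shiftXY (-P) a b = -shiftXY P a b := by
  simp [shiftXY, Polynomial.map_neg, neg_comp]

lemma shiftXY_pow (P : Polynomial (Polynomial F)) (k : ℕ) (a b : F) :
    shiftXY (P ^ k) a b = shiftXY P a b ^ k := by
  simp [shiftXY, Polynomial.map_pow, pow_comp]

lemma shiftXY_zero (a b : F) : shiftXY (0 : Polynomial (Polynomial F)) a b = 0 := by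
  simp [shiftXY]

lemma hasMultAt_mul {P Q : Polynomial (Polynomial F)} {a b : F} {u v : ℕ}
    (hP : HasMultAt P a b u) (hQ : HasMultAt Q a b v) : HasMultAt (P * Q) a b (u + v) := by
  intro i j hij
  rw [shiftXY_mul]
  exact lowV_mul hP hQ i j hij

lemma hasMultAt_zero' (P : Polynomial (Polynomial F)) (a b : F) : HasMultAt P a b 0 :=
  fun i j h => absurd h (by omega)

lemma hasMultAt_mul_left {P Q : Polynomial (Polynomial F)} {a b : F} {v : ℕ}
    (hQ : HasMultAt Q a b v) : HasMultAt (P * Q) a b v := by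
  have := hasMultAt_mul (hasMultAt_zero' P a b) hQ
  simpa using this

lemma hasMultAt_add {P Q : Polynomial (Polynomial F)} {a b : F} {v : ℕ}
    (hP : HasMultAt P a b v) (hQ : HasMultAt Q a b v) : HasMultAt (P + Q) a b v := by
  intro i j hij
  rw [shiftXY_add]
  simp [Polynomial.coeff_add, hP i j hij, hQ i j hij]

lemma hasMultAt_neg {P : Polynomial (Polynomial F)} {a b : F} {v : ℕ}
    (hP : HasMultAt P a b v) : HasMultAt (-P) a b v := by
  intro i j hij
  rw [shiftXY_neg]
  simp [hP i j hij]

lemma hasMultAt_pow {P : Polynomial (Polynomial F)} {a b : F} {v : ℕ}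
    (hP : HasMultAt P a b v) (k : ℕ) : HasMultAt (P ^ k) a b (k * v) := by
  induction k with
  | zero => simpa using hasMultAt_zero' (1 : Polynomial (Polynomial F)) a b
  | succ k ih =>
      have hkv : (k + 1) * v = k * v + v := by ring
      rw [hkv, pow_succ]
      exact hasMultAt_mul ih hP

lemma hasMultAt_X_sub_C {R : Polynomial F} {a b : F} (h : R.eval a = b) :
    HasMultAt (X - C R : Polynomial (Polynomial F)) a b 1 := by
  intro i j hij
  have hi : i = 0 := by omega
  have hj : j = 0 := by omega
  subst hi; subst hj
  have : shiftXY (X - C R : Polynomial (Polynomial F)) a b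
      = X + C (C b) - C (R.comp (X + C a)) := by
    simp [shiftXY, Polynomial.map_sub, sub_comp, X_comp, C_comp, aeval_def, eval₂_eq_eval_map,
      Polynomial.comp]
  rw [this]
  simp only [Polynomial.coeff_sub, Polynomial.coeff_add, Polynomial.coeff_X_zero,
    Polynomial.coeff_C_zero, zero_add]
  have h0 : (R.comp (X + C a)).coeff 0 = R.eval a := by
    rw [Polynomial.coeff_zero_eq_eval_zero, Polynomial.eval_comp]
    simp
  simp [h0, h]

/-- `InterpSet` as a submodule over `F[X]`. -/
noncomputable def interpSubmodule {n : ℕ} (α r' : Fin n → F) (s ℓ : ℕ) :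
    Submodule (Polynomial F) (Polynomial (Polynomial F)) where
  carrier := InterpSet α r' s ℓ
  add_mem' := by
    rintro P Q ⟨hPd, hPm⟩ ⟨hQd, hQm⟩
    refine ⟨le_trans (Polynomial.natDegree_add_le P Q) (by omega), fun i => hasMultAt_add (hPm i) (hQm i)⟩
  zero_mem' := by
    refine ⟨by simp, fun i => ?_⟩
    intro u v _
    rw [shiftXY_zero]
    simp
  smul_mem' := by
    intro c P ⟨hPd, hPm⟩
    rw [Polynomial.smul_eq_C_mul]
    exact ⟨le_trans (Polynomial.natDegree_C_mul_le c P) hPd,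
      fun i => hasMultAt_mul_left (hPm i)⟩

lemma mem_interpSubmodule {n : ℕ} {α r' : Fin n → F} {s ℓ : ℕ}
    {Q : Polynomial (Polynomial F)} :
    Q ∈ interpSubmodule α r' s ℓ ↔ Q ∈ InterpSet α r' s ℓ := Iff.rfl

lemma range_snoc' {m : ℕ} {β : Type*} (f : Fin m → β) (x : β) :
    Set.range (Fin.snoc f x : Fin (m + 1) → β) = insert x (Set.range f) := by
  ext y
  constructor
  · rintro ⟨i, rfl⟩
    refine Fin.lastCases ?_ ?_ i
    · simp
    · intro j; simp
  · rintro (rfl | ⟨j, rfl⟩)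
    · exact ⟨Fin.last m, by simp⟩
    · exact ⟨j.castSucc, by simp⟩

end Aux

/-- If B^(0), …, B^(ℓ) is a basis of M_{s,ℓ}, then
B^(0), …, B^(ℓ), Y^{ℓ−s+1}(Y−R)^s is a basis of M_{s,ℓ+1}. -/
theorem statement9 {F : Type*} [Field F] [Fintype F] {n : ℕ}
    (α : Fin n → F) (hα : Function.Injective α) (r' : Fin n → F)
    (s ℓ : ℕ) (hs : 1 ≤ s) (hsℓ : s ≤ ℓ)
    (R : Polynomial F) (hRdeg : R.natDegree < n) (hR : ∀ i, R.eval (α i) = r' i)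
    (B : Fin (ℓ + 1) → Polynomial (Polynomial F))
    (hB : IsBasisOfInterp α r' s ℓ B) :
    IsBasisOfInterp α r' s (ℓ + 1)
      (Fin.snoc B (X ^ (ℓ - s + 1) * (X - C R) ^ s)) := by
  obtain ⟨hBli, hBspan⟩ := hB
  set G : Polynomial (Polynomial F) := X ^ (ℓ - s + 1) * (X - C R) ^ s with hGdef
  -- basic facts about G
  have hGmonic : G.Monic := (monic_X_pow _).mul ((monic_X_sub_C R).pow s)
  have hGdeg : G.natDegree = ℓ + 1 := by
    rw [hGdef, Monic.natDegree_mul (monic_X_pow _) ((monic_X_sub_C R).pow s),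
      natDegree_X_pow, Monic.natDegree_pow (monic_X_sub_C R), natDegree_X_sub_C]
    omega
  have hGmult : ∀ i, HasMultAt G (α i) (r' i) s := by
    intro i
    have h1 : HasMultAt ((X - C R : Polynomial (Polynomial F)) ^ s) (α i) (r' i) s := by
      have := hasMultAt_pow (hasMultAt_X_sub_C (hR i)) s
      simpa using this
    exact hasMultAt_mul_left h1
  have hGmem : G ∈ InterpSet α r' s (ℓ + 1) := ⟨le_of_eq hGdeg, hGmult⟩
  -- membership of the B i
  have hBmem : ∀ i, B i ∈ InterpSet α r' s ℓ := by
    intro i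
    rw [← hBspan]
    exact Submodule.subset_span (Set.mem_range_self i)
  -- span of B consists of elements of degree ≤ ℓ
  have hspan_deg : ∀ Q ∈ Submodule.span (Polynomial F) (Set.range B), Q.natDegree ≤ ℓ := by
    intro Q hQ
    have : Q ∈ InterpSet α r' s ℓ := by rw [← hBspan]; exact hQ
    exact this.1
  have hGnot : G ∉ Submodule.span (Polynomial F) (Set.range B) := by
    intro h
    have := hspan_deg G h
    omega
  constructor
  · -- linear independence
    rw [Fintype.linearIndependent_iff]
    intro g hg
    have hsum : (∑ i : Fin (ℓ + 1), g i.castSucc • B i) + g (Fin.last (ℓ + 1)) • G = 0 := by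
      rw [Fin.sum_univ_castSucc] at hg
      simpa only [Fin.snoc_castSucc, Fin.snoc_last] using hg
    have hlast : g (Fin.last (ℓ + 1)) = 0 := by
      by_contra hne
      set c := g (Fin.last (ℓ + 1))
      have hS : (∑ i : Fin (ℓ + 1), g i.castSucc • B i) ∈
          Submodule.span (Polynomial F) (Set.range B) :=
        Submodule.sum_mem _ fun i _ =>
          Submodule.smul_mem _ _ (Submodule.subset_span (Set.mem_range_self i))
      have hdegS := hspan_deg _ hS
      have hco : ((∑ i : Fin (ℓ + 1), g i.castSucc • B i) + c • G).coeff (ℓ + 1) = c := by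
        rw [Polynomial.coeff_add,
          Polynomial.coeff_eq_zero_of_natDegree_lt (lt_of_le_of_lt hdegS (by omega)),
          zero_add, Polynomial.smul_eq_C_mul, Polynomial.coeff_C_mul]
        have : G.coeff (ℓ + 1) = 1 := by
          have := hGmonic.leadingCoeff
          rwa [Polynomial.leadingCoeff, hGdeg] at this
        rw [this, mul_one]
      rw [hsum, Polynomial.coeff_zero] at hco
      exact hne hco.symm
    have hsum2 : (∑ i : Fin (ℓ + 1), g i.castSucc • B i) = 0 := by
      rw [hlast, zero_smul, add_zero] at hsum
      exact hsum
    have hz := Fintype.linearIndependent_iff.mp hBli (fun i => g i.castSucc) hsum2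
    intro i
    refine Fin.lastCases hlast (fun j => hz j) i
  · -- span
    apply Set.eq_of_subset_of_subset
    · -- span ⊆ InterpSet (ℓ+1)
      intro Q hQ
      have hle : Submodule.span (Polynomial F) (Set.range (Fin.snoc B G : Fin (ℓ + 2) → _)) ≤
          interpSubmodule α r' s (ℓ + 1) := by
        rw [Submodule.span_le]
        rw [range_snoc']
        rintro P (rfl | ⟨j, rfl⟩)
        · exact hGmem
        · obtain ⟨hd, hm⟩ := hBmem j
          exact ⟨by omega, hm⟩
      exact hle hQ
    · -- InterpSet (ℓ+1) ⊆ span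
      intro Q hQ
      obtain ⟨hQd, hQm⟩ := hQ
      set c : Polynomial F := Q.coeff (ℓ + 1) with hc
      have hQGmem : Q - c • G ∈ interpSubmodule α r' s (ℓ + 1) :=
        sub_mem (⟨hQd, hQm⟩ : Q ∈ interpSubmodule α r' s (ℓ + 1))
          (Submodule.smul_mem _ _ hGmem)
      have hdeg : (Q - c • G).natDegree ≤ ℓ := by
        rw [Polynomial.natDegree_le_iff_coeff_eq_zero]
        intro N hN
        rw [Polynomial.coeff_sub, Polynomial.smul_eq_C_mul, Polynomial.coeff_C_mul]
        rcases eq_or_lt_of_le (Nat.succ_le_of_lt hN) with h | h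
        · have hG1 : G.coeff (ℓ + 1) = 1 := by
            have := hGmonic.leadingCoeff
            rwa [Polynomial.leadingCoeff, hGdeg] at this
          rw [← h, hG1, mul_one, ← hc, sub_self]
        · rw [Polynomial.coeff_eq_zero_of_natDegree_lt (lt_of_le_of_lt hQd h),
            Polynomial.coeff_eq_zero_of_natDegree_lt (by omega : G.natDegree < N)]
          simp
      have hmem : Q - c • G ∈ Submodule.span (Polynomial F) (Set.range B) := by
        have hset : Q - c • G ∈ InterpSet α r' s ℓ := ⟨hdeg, fun i => hQGmem.2 i⟩
        rw [← hBspan] at hset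
        exact hset
      rw [range_snoc']
      have h1 : Q - c • G ∈ Submodule.span (Polynomial F)
          (insert G (Set.range B)) :=
        Submodule.span_mono (Set.subset_insert _ _) hmem
      have h2 : c • G ∈ Submodule.span (Polynomial F) (insert G (Set.range B)) :=
        Submodule.smul_mem _ _ (Submodule.subset_span (Set.mem_insert _ _))
      have := add_mem h1 h2
      simpa using this
end

section
/- Let B be a nonsingular (ℓ+1)×(ℓ+1) matrix over F_q[X] such that B·W_ℓ is in weak Popov form, and suppose deg R ≥ k. Form the (ℓ+2)×(ℓ+2) matrix C whose first row is (G^{s+1}, 0, …, 0) and whose (i+1)-th row is (0 | b_i) − R·(b_i | 0), where b_i is the i-th row of B. Then the orthogonality defect of C·W_{ℓ+1} equals (ℓ+1)(deg R − k + 1), which is at most (ℓ+1)(n−k). -/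
open Polynomial

open scoped Classical

/-- The degree of a vector over `F[X]`: the maximum of the degrees of its entries
(`⊥` for the zero vector). -/
noncomputable def vecDeg {F : Type*} [Field F] {m : ℕ} (v : Fin m → Polynomial F) : WithBot ℕ :=
  Finset.univ.sup fun j => (v j).degree

/-- The leading position of a vector over `F[X]`: the largest index attaining the
vector's degree. -/
noncomputable def leadPos {F : Type*} [Field F] {m : ℕ} (v : Fin m → Polynomial F) : ℕ :=
  (Finset.univ.filter fun j : Fin m => (v j).degree = vecDeg v).sup fun j => (j : ℕ)

/-- A square matrix over `F[X]` is in weak Popov form if the leading positions of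
its rows are pairwise distinct. -/
noncomputable def WeakPopov {F : Type*} [Field F] {m : ℕ}
    (V : Matrix (Fin m) (Fin m) (Polynomial F)) : Prop :=
  Function.Injective fun i => leadPos (V i)

/-- The degree of a matrix over `F[X]`: the sum of its row degrees (in `WithBot ℕ`). -/
noncomputable def matDeg {F : Type*} [Field F] {m : ℕ}
    (V : Matrix (Fin m) (Fin m) (Polynomial F)) : WithBot ℕ :=
  ∑ i, vecDeg (V i)

/-- The degree of a vector over `F[X]`, as a natural number (via `natDegree`). -/
def vecDegNat {F : Type*} [Field F] {m : ℕ} (v : Fin m → Polynomial F) : ℕ :=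
  Finset.univ.sup fun j => (v j).natDegree

/-- The degree of a matrix over `F[X]` as a natural number: the sum of its row degrees. -/
def matDegNat {F : Type*} [Field F] {m : ℕ}
    (V : Matrix (Fin m) (Fin m) (Polynomial F)) : ℕ :=
  ∑ i, vecDegNat (V i)

/-- The diagonal weight matrix W_ℓ = diag(1, X^{k−1}, …, X^{ℓ(k−1)}). -/
noncomputable def Wmat (F : Type*) [Field F] (k ℓ : ℕ) :
    Matrix (Fin (ℓ + 1)) (Fin (ℓ + 1)) (Polynomial F) :=
  Matrix.diagonal fun i => X ^ ((i : ℕ) * (k - 1))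

/-- The matrix C^II of micro-step type II: first row (G^{s+1}, 0, …, 0), and for each
row b_i of B the row (0 | b_i) − R·(b_i | 0). -/
noncomputable def stepIIMat {F : Type*} [Field F] (ℓ s : ℕ)
    (B : Matrix (Fin (ℓ + 1)) (Fin (ℓ + 1)) (Polynomial F)) (R G : Polynomial F) :
    Matrix (Fin (ℓ + 2)) (Fin (ℓ + 2)) (Polynomial F) :=
  Matrix.of fun i j =>
    if hi : (i : ℕ) = 0 then
      if (j : ℕ) = 0 then G ^ (s + 1) else 0
    else
      (if hj : 1 ≤ (j : ℕ) then
          B ⟨(i : ℕ) - 1, by have := i.isLt; omega⟩ ⟨(j : ℕ) - 1, by have := j.isLt; omega⟩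
        else 0)
      - R * (if hj : (j : ℕ) < ℓ + 1 then
          B ⟨(i : ℕ) - 1, by have := i.isLt; omega⟩ ⟨(j : ℕ), hj⟩ else 0)

-- coefficient of a product at the sum of degree bounds
lemma coeff_prod_bound {R : Type*} [CommSemiring R] {ι : Type*} (s : Finset ι)
    (f : ι → Polynomial R) (d : ι → ℕ) (h : ∀ i ∈ s, (f i).natDegree ≤ d i) :
    (∏ i ∈ s, f i).coeff (∑ i ∈ s, d i) = ∏ i ∈ s, (f i).coeff (d i) := by
  induction s using Finset.cons_induction with
  | empty => simp
  | cons a s ha ih =>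
    rw [Finset.prod_cons, Finset.sum_cons, Finset.prod_cons,
      Polynomial.coeff_mul_add_eq_of_natDegree_le (h a (Finset.mem_cons_self a s))
        (le_trans (Polynomial.natDegree_prod_le s f)
          (Finset.sum_le_sum fun i hi => h i (Finset.mem_cons_of_mem hi))),
      ih fun i hi => h i (Finset.mem_cons_of_mem hi)]

-- facts about a row with a nonzero entry
lemma row_max {F : Type*} [Field F] {m : ℕ} (v : Fin m → Polynomial F) (j0 : Fin m)
    (h0 : v j0 ≠ 0) :
    ∃ j, v j ≠ 0 ∧ (v j).degree = vecDeg v ∧ (v j).natDegree = vecDegNat v := by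
  obtain ⟨j, -, hj⟩ := Finset.exists_mem_eq_sup Finset.univ ⟨j0, Finset.mem_univ j0⟩
    (fun j => (v j).degree)
  have hdeg : (v j).degree = vecDeg v := hj.symm
  have hne : v j ≠ 0 := by
    intro hz
    have h1 : (v j0).degree ≤ vecDeg v := Finset.le_sup (f := fun j => (v j).degree) (Finset.mem_univ j0)
    rw [← hdeg, hz, Polynomial.degree_zero, le_bot_iff, Polynomial.degree_eq_bot] at h1
    exact h0 h1
  refine ⟨j, hne, hdeg, le_antisymm (Finset.le_sup (f := fun j => (v j).natDegree) (Finset.mem_univ j)) ?_⟩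
  refine Finset.sup_le fun j' _ => ?_
  by_cases hz : v j' = 0
  · simp [hz]
  · exact Polynomial.natDegree_le_natDegree (hdeg ▸ Finset.le_sup (f := fun j => (v j).degree) (Finset.mem_univ j'))

lemma pivot_exists {F : Type*} [Field F] {m : ℕ} (v : Fin m → Polynomial F) (j0 : Fin m)
    (h0 : v j0 ≠ 0) :
    ∃ jp : Fin m, (jp : ℕ) = leadPos v ∧ (v jp).degree = vecDeg v := by
  obtain ⟨j, hjne, hjdeg, -⟩ := row_max v j0 h0
  have hmem : j ∈ Finset.univ.filter fun j : Fin m => (v j).degree = vecDeg v := by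
    simp [hjdeg]
  obtain ⟨jp, hjp, hsup⟩ := Finset.exists_mem_eq_sup _ ⟨j, hmem⟩ (fun j : Fin m => (j : ℕ))
  exact ⟨jp, hsup.symm, (Finset.mem_filter.mp hjp).2⟩

lemma le_leadPos {F : Type*} [Field F] {m : ℕ} {v : Fin m → Polynomial F} {j : Fin m}
    (h : (v j).degree = vecDeg v) : (j : ℕ) ≤ leadPos v :=
  Finset.le_sup (by simp [h])

-- Key lemma: weak Popov form implies zero orthogonality defect
lemma weakPopov_det {F : Type*} [Field F] {m : ℕ} (V : Matrix (Fin m) (Fin m) (Polynomial F))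
    (h0 : ∀ i, ∃ j, V i j ≠ 0) (hWP : WeakPopov V) :
    V.det ≠ 0 ∧ V.det.natDegree = matDegNat V := by
  classical
  set d : Fin m → ℕ := fun i => vecDegNat (V i) with hd
  have hle : ∀ i j, (V i j).natDegree ≤ d i := fun i j =>
    Finset.le_sup (f := fun j => (V i j).natDegree) (Finset.mem_univ j)
  -- each row's vecDeg equals its natural degree
  have hvd : ∀ i, vecDeg (V i) = ((d i : ℕ) : WithBot ℕ) := by
    intro i
    obtain ⟨j, hne, hdeg, hnat⟩ := row_max (V i) _ (h0 i).choose_spec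
    rw [← hdeg, Polynomial.degree_eq_natDegree hne, hnat]
  -- entries with nonzero coefficient at d i attain the row degree
  have hattain : ∀ i j, (V i j).coeff (d i) ≠ 0 → (V i j).degree = vecDeg (V i) := by
    intro i j hc
    have hne : V i j ≠ 0 := fun hz => hc (by simp [hz])
    have h1 : d i ≤ (V i j).natDegree := Polynomial.le_natDegree_of_ne_zero hc
    have h2 : (V i j).natDegree = d i := le_antisymm (hle i j) h1
    rw [Polynomial.degree_eq_natDegree hne, h2, hvd i]
  -- the pivot map
  have hpiv : ∀ i, ∃ jp : Fin m, (jp : ℕ) = leadPos (V i) ∧ (V i jp).degree = vecDeg (V i) :=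
    fun i => pivot_exists (V i) _ (h0 i).choose_spec
  choose p hp1 hp2 using hpiv
  have hpinj : Function.Injective p := by
    intro i i' h
    apply hWP
    simp only
    rw [← hp1 i, ← hp1 i', h]
  have hpbij : Function.Bijective p := Finite.injective_iff_bijective.mp hpinj
  set σ0 : Equiv.Perm (Fin m) := Equiv.ofBijective p hpbij with hσ0
  have hσ0app : ∀ i, σ0 i = p i := fun i => rfl
  -- pivot entries
  have hpivne : ∀ i, V i (p i) ≠ 0 := by
    intro i
    intro hz
    have := hp2 i
    rw [hz, Polynomial.degree_zero, hvd i] at this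
    exact absurd this.symm (by simp)
  have hpivdeg : ∀ i, (V i (p i)).natDegree = d i := by
    intro i
    have := hp2 i
    rw [Polynomial.degree_eq_natDegree (hpivne i), hvd i] at this
    exact_mod_cast this
  have hpivcoeff : ∀ i, (V i (p i)).coeff (d i) ≠ 0 := by
    intro i
    rw [← hpivdeg i]
    exact Polynomial.leadingCoeff_ne_zero.mpr (hpivne i) ∘ id
  set D : ℕ := ∑ i, d i with hD
  have hmat : matDegNat V = D := rfl
  -- coefficient of each determinant term
  have hterm : ∀ σ : Equiv.Perm (Fin m),
      (∏ i, V (σ i) i).coeff D = ∏ i, (V (σ i) i).coeff (d (σ i)) := by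
    intro σ
    have hDσ : D = ∑ i, d (σ i) := (Equiv.sum_comp σ d).symm
    rw [hDσ]
    exact coeff_prod_bound Finset.univ _ _ (fun i _ => hle (σ i) i)
  -- vanishing for non-pivot permutations
  have hvanish : ∀ σ : Equiv.Perm (Fin m), σ ≠ σ0⁻¹ →
      (∏ i, (V (σ i) i).coeff (d (σ i))) = 0 := by
    intro σ hσ
    by_contra hne
    have hfac : ∀ i, (V (σ i) i).coeff (d (σ i)) ≠ 0 := by
      intro i hz
      exact hne (Finset.prod_eq_zero (Finset.mem_univ i) hz)
    have hlep : ∀ i : Fin m, (i : ℕ) ≤ ((p (σ i) : ℕ)) := by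
      intro i
      rw [hp1 (σ i)]
      exact le_leadPos (hattain (σ i) i (hfac i))
    have hsum : ∑ i : Fin m, (i : ℕ) = ∑ i : Fin m, ((p (σ i)) : ℕ) := by
      have : (fun i => p (σ i)) = ⇑(σ.trans σ0) := rfl
      calc ∑ i : Fin m, (i : ℕ) = ∑ i : Fin m, (((σ.trans σ0) i : ℕ)) :=
            (Equiv.sum_comp (σ.trans σ0) (fun j : Fin m => (j : ℕ))).symm
        _ = ∑ i : Fin m, ((p (σ i)) : ℕ) := rfl
    have heq : ∀ i : Fin m, (i : ℕ) = ((p (σ i)) : ℕ) := by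
      by_contra hc
      push_neg at hc
      obtain ⟨i, hi⟩ := hc
      have : ∑ i : Fin m, (i : ℕ) < ∑ i : Fin m, ((p (σ i)) : ℕ) :=
        Finset.sum_lt_sum (fun i _ => hlep i)
          ⟨i, Finset.mem_univ i, lt_of_le_of_ne (hlep i) hi⟩
      omega
    apply hσ
    refine Equiv.ext fun i => ?_
    have : p (σ i) = i := Fin.ext (heq i).symm
    have h2 : σ0 (σ i) = i := this
    calc σ i = σ0⁻¹ (σ0 (σ i)) := (Equiv.symm_apply_apply σ0 (σ i)).symm
      _ = σ0⁻¹ i := by rw [h2]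
  -- the pivot permutation term
  have hpivterm : (∏ i, (V (σ0⁻¹ i) i).coeff (d (σ0⁻¹ i))) ≠ 0 := by
    have hre : ∀ i : Fin m, (V (σ0⁻¹ (σ0 i)) (σ0 i)).coeff (d (σ0⁻¹ (σ0 i)))
        = (V i (p i)).coeff (d i) := by
      intro i
      rw [show σ0⁻¹ (σ0 i) = i from Equiv.symm_apply_apply σ0 i]
      rfl
    rw [← Equiv.prod_comp σ0 (fun i => (V (σ0⁻¹ i) i).coeff (d (σ0⁻¹ i)))]
    rw [Finset.prod_congr rfl (fun i _ => hre i)]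
    exact Finset.prod_ne_zero_iff.mpr (fun i _ => hpivcoeff i)
  -- coefficient of det at D
  have hcoeff : V.det.coeff D ≠ 0 := by
    rw [Matrix.det_apply, Polynomial.finset_sum_coeff]
    have : ∀ σ : Equiv.Perm (Fin m),
        (Equiv.Perm.sign σ • ∏ i, V (σ i) i).coeff D
          = Equiv.Perm.sign σ • (∏ i, (V (σ i) i).coeff (d (σ i))) := by
      intro σ
      rw [Polynomial.coeff_smul, hterm σ]
    rw [Finset.sum_congr rfl (fun σ _ => this σ)]
    rw [Finset.sum_eq_single σ0⁻¹ (fun σ _ hσ => by rw [hvanish σ hσ, smul_zero])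
      (fun h => absurd (Finset.mem_univ _) h)]
    intro hz
    apply hpivterm
    rcases Int.units_eq_one_or (Equiv.Perm.sign σ0⁻¹) with h | h <;> rw [h] at hz
    · simpa using hz
    · simpa using hz
  have hdet0 : V.det ≠ 0 := fun hz => hcoeff (by simp [hz])
  refine ⟨hdet0, le_antisymm ?_ ?_⟩
  · rw [hmat, Matrix.det_apply]
    refine Polynomial.natDegree_sum_le_of_forall_le _ _ fun σ _ => ?_
    have h1 : (Equiv.Perm.sign σ • ∏ i, V (σ i) i)
        = ((Equiv.Perm.sign σ : ℤ) : Polynomial F) * ∏ i, V (σ i) i := by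
      rw [Units.smul_def, zsmul_eq_mul]
    rw [h1]
    refine le_trans Polynomial.natDegree_mul_le ?_
    rw [Polynomial.natDegree_intCast, zero_add]
    refine le_trans (Polynomial.natDegree_prod_le Finset.univ _) ?_
    calc ∑ i, (V (σ i) i).natDegree ≤ ∑ i, d (σ i) :=
          Finset.sum_le_sum (fun i _ => hle (σ i) i)
      _ = D := Equiv.sum_comp σ d
  · rw [hmat]
    exact Polynomial.le_natDegree_of_ne_zero hcoeff

-- the unipotent lower-triangular factor
noncomputable def stepU {F : Type*} [Field F] (ℓ : ℕ) (R : Polynomial F) :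
    Matrix (Fin (ℓ + 1)) (Fin (ℓ + 1)) (Polynomial F) :=
  Matrix.of fun a b =>
    (if a = b then 1 else 0) + (if (a : ℕ) = (b : ℕ) + 1 then -R else 0)

lemma stepU_det {F : Type*} [Field F] (ℓ : ℕ) (R : Polynomial F) :
    (stepU ℓ R).det = 1 := by
  rw [Matrix.det_of_lowerTriangular (stepU ℓ R) ?_]
  · refine Finset.prod_eq_one fun a _ => ?_
    show (if a = a then (1 : Polynomial F) else 0) + (if (a : ℕ) = (a : ℕ) + 1 then -R else 0) = 1
    rw [if_pos rfl, if_neg (by omega), add_zero]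
  · intro a b hab
    replace hab : a < b := hab
    simp only [stepU, Matrix.of_apply]
    rw [if_neg (by exact fun h => absurd h (ne_of_lt hab)), if_neg (by
      intro h
      have := a.isLt
      have hb : (a : ℕ) < (b : ℕ) := hab
      omega), add_zero]

lemma stepII_minor {F : Type*} [Field F] (ℓ s : ℕ)
    (B : Matrix (Fin (ℓ + 1)) (Fin (ℓ + 1)) (Polynomial F)) (R G : Polynomial F) :
    (stepIIMat ℓ s B R G).submatrix Fin.succ (Fin.succAbove 0) = B * stepU ℓ R := by
  refine Matrix.ext fun i j => ?_
  have hmul : (B * stepU ℓ R) i j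
      = B i j + (if h : (j : ℕ) + 1 < ℓ + 1 then B i ⟨(j : ℕ) + 1, h⟩ * (-R) else 0) := by
    rw [Matrix.mul_apply]
    have hsplit : ∀ a : Fin (ℓ + 1), B i a * stepU ℓ R a j
        = (if a = j then B i a else 0) + (if (a : ℕ) = (j : ℕ) + 1 then B i a * (-R) else 0) := by
      intro a
      simp only [stepU, Matrix.of_apply, mul_add, mul_ite, mul_one, mul_zero]
    rw [Finset.sum_congr rfl fun a _ => hsplit a, Finset.sum_add_distrib,
      Finset.sum_ite_eq' Finset.univ j (fun a => B i a)]
    simp only [Finset.mem_univ, if_true]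
    congr 1
    by_cases h : (j : ℕ) + 1 < ℓ + 1
    · rw [dif_pos h]
      have hre : (∑ a : Fin (ℓ + 1), if (a : ℕ) = (j : ℕ) + 1 then B i a * (-R) else 0)
          = ∑ a : Fin (ℓ + 1), if a = (⟨(j : ℕ) + 1, h⟩ : Fin (ℓ + 1)) then B i a * (-R) else 0 :=
        Finset.sum_congr rfl fun a _ => if_congr (by simp [Fin.ext_iff]) rfl rfl
      rw [hre,
        Finset.sum_ite_eq' Finset.univ (⟨(j : ℕ) + 1, h⟩ : Fin (ℓ + 1)) (fun a => B i a * (-R))]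
      simp
    · rw [dif_neg h]
      refine Finset.sum_eq_zero fun a _ => if_neg fun ha => h ?_
      rw [← ha]; exact a.isLt
  rw [hmul]
  have hsA : (Fin.succAbove 0 j) = j.succ := by
    rw [Fin.succAbove_zero]
  rw [Matrix.submatrix_apply, hsA]
  show stepIIMat ℓ s B R G i.succ j.succ = _
  simp only [stepIIMat, Matrix.of_apply, Fin.val_succ]
  rw [dif_neg (by omega), dif_pos (by omega)]
  simp only [Nat.add_sub_cancel, Fin.eta]
  by_cases h : (j : ℕ) + 1 < ℓ + 1
  · rw [dif_pos h, dif_pos h]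
    ring
  · rw [dif_neg h, dif_neg h]
    ring

lemma stepII_det {F : Type*} [Field F] (ℓ s : ℕ)
    (B : Matrix (Fin (ℓ + 1)) (Fin (ℓ + 1)) (Polynomial F)) (R G : Polynomial F) :
    (stepIIMat ℓ s B R G).det = G ^ (s + 1) * B.det := by
  rw [Matrix.det_succ_row_zero]
  rw [Finset.sum_eq_single 0 ?_ (fun h => absurd (Finset.mem_univ _) h)]
  · have h00 : stepIIMat ℓ s B R G 0 0 = G ^ (s + 1) := by
      simp [stepIIMat]
    rw [h00, stepII_minor ℓ s B R G, Matrix.det_mul, stepU_det, mul_one]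
    simp
  · intro j _ hj
    have h0j : stepIIMat ℓ s B R G 0 j = 0 := by
      simp only [stepIIMat, Matrix.of_apply, Fin.val_zero]
      simp only [↓reduceDIte]
      rw [if_neg (by
        intro h
        exact hj (Fin.ext (by simpa using h)))]
    rw [h0j, mul_zero, zero_mul]

lemma stepII_apply_zero {F : Type*} [Field F] (ℓ s : ℕ)
    (B : Matrix (Fin (ℓ + 1)) (Fin (ℓ + 1)) (Polynomial F)) (R G : Polynomial F)
    (j : Fin (ℓ + 2)) :
    stepIIMat ℓ s B R G 0 j = if (j : ℕ) = 0 then G ^ (s + 1) else 0 := by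
  simp [stepIIMat]

lemma stepII_apply_succ {F : Type*} [Field F] (ℓ s : ℕ)
    (B : Matrix (Fin (ℓ + 1)) (Fin (ℓ + 1)) (Polynomial F)) (R G : Polynomial F)
    (i : Fin (ℓ + 1)) (j : Fin (ℓ + 2)) :
    stepIIMat ℓ s B R G i.succ j
      = (if hj : 1 ≤ (j : ℕ) then B i ⟨(j : ℕ) - 1, by have := j.isLt; omega⟩ else 0)
        - R * (if hj : (j : ℕ) < ℓ + 1 then B i ⟨(j : ℕ), hj⟩ else 0) := by
  simp only [stepIIMat, Matrix.of_apply, Fin.val_succ]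
  rw [dif_neg (by omega)]
  simp only [Nat.add_sub_cancel, Fin.eta]

/-- If B is nonsingular with B·W_ℓ in weak Popov form and deg R ≥ k, then
the orthogonality defect of C^II·W_{ℓ+1} equals (ℓ+1)(deg R − k + 1), which is at most
(ℓ+1)(n−k). -/
theorem statement12 {F : Type*} [Field F] [Fintype F] {n k s ℓ : ℕ}
    (hk : 1 ≤ k) (hkn : k ≤ n) (hs : 1 ≤ s) (hsℓ : s ≤ ℓ)
    (R : Polynomial F) (hRn : R.natDegree < n) (hRk : k ≤ R.natDegree)
    (G : Polynomial F) (hG : G.natDegree = n) (hG0 : G ≠ 0)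
    (B : Matrix (Fin (ℓ + 1)) (Fin (ℓ + 1)) (Polynomial F))
    (hB : B.det ≠ 0) (hWP : WeakPopov (B * Wmat F k ℓ)) :
    matDegNat (stepIIMat ℓ s B R G * Wmat F k (ℓ + 1)) =
        (stepIIMat ℓ s B R G * Wmat F k (ℓ + 1)).det.natDegree +
          (ℓ + 1) * (R.natDegree - k + 1) ∧
      (ℓ + 1) * (R.natDegree - k + 1) ≤ (ℓ + 1) * (n - k) := by
  classical
  set r := R.natDegree with hr
  have hR0 : R ≠ 0 := by
    intro hz
    have : r = 0 := by rw [hr, hz, Polynomial.natDegree_zero]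
    omega
  have hXe : ∀ e : ℕ, (X : Polynomial F) ^ e ≠ 0 := fun e => pow_ne_zero e Polynomial.X_ne_zero
  set BW := B * Wmat F k ℓ with hBWdef
  set C := stepIIMat ℓ s B R G with hCdef
  set M := C * Wmat F k (ℓ + 1) with hMdef
  have hBW : ∀ i j, BW i j = B i j * X ^ ((j : ℕ) * (k - 1)) := by
    intro i j
    rw [hBWdef, Wmat, Matrix.mul_diagonal]
  have hM : ∀ i j, M i j = C i j * X ^ ((j : ℕ) * (k - 1)) := by
    intro i j
    rw [hMdef, Wmat, Matrix.mul_diagonal]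
  -- rows of B and BW are nonzero
  have hrowB : ∀ i, ∃ j, B i j ≠ 0 := by
    intro i
    by_contra hc
    push_neg at hc
    exact hB (Matrix.det_eq_zero_of_row_eq_zero i hc)
  have hrowBW : ∀ i, ∃ j, BW i j ≠ 0 := by
    intro i
    obtain ⟨j, hj⟩ := hrowB i
    exact ⟨j, by rw [hBW i j]; exact mul_ne_zero hj (hXe _)⟩
  set d : Fin (ℓ + 1) → ℕ := fun i => vecDegNat (BW i) with hd
  -- weak Popov gives zero defect for BW
  obtain ⟨hBWdet0, hBWdeg⟩ := weakPopov_det BW hrowBW hWP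
  -- determinant degrees
  set w1 : ℕ := ∑ j : Fin (ℓ + 1), (j : ℕ) * (k - 1) with hw1
  set w2 : ℕ := ∑ j : Fin (ℓ + 2), (j : ℕ) * (k - 1) with hw2
  have hdetW1 : (Wmat F k ℓ).det = X ^ w1 := by
    rw [Wmat, Matrix.det_diagonal, Finset.prod_pow_eq_pow_sum]
  have hdetW2 : (Wmat F k (ℓ + 1)).det = X ^ w2 := by
    rw [Wmat, Matrix.det_diagonal, Finset.prod_pow_eq_pow_sum]
  have hGpow : (G ^ (s + 1)).natDegree = (s + 1) * n := by
    rw [Polynomial.natDegree_pow, hG]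
  have hGpow0 : G ^ (s + 1) ≠ 0 := pow_ne_zero _ hG0
  have hBWdetdeg : BW.det.natDegree = B.det.natDegree + w1 := by
    rw [hBWdef, Matrix.det_mul, hdetW1, Polynomial.natDegree_mul hB (hXe w1),
      Polynomial.natDegree_X_pow]
  have hdetM : M.det.natDegree = (s + 1) * n + B.det.natDegree + w2 := by
    rw [hMdef, Matrix.det_mul, hdetW2, hCdef, stepII_det ℓ s B R G,
      Polynomial.natDegree_mul (mul_ne_zero hGpow0 hB) (hXe w2),
      Polynomial.natDegree_mul hGpow0 hB, Polynomial.natDegree_X_pow, hGpow]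
  -- row 0 of M
  have hrow0 : vecDegNat (M 0) = (s + 1) * n := by
    have hM00 : M 0 0 = G ^ (s + 1) := by
      rw [hM 0 0, hCdef, stepII_apply_zero]
      simp
    refine le_antisymm (Finset.sup_le fun j _ => ?_) ?_
    · by_cases hj : j = 0
      · rw [hj, hM00, hGpow]
      · have : M 0 j = 0 := by
          rw [hM 0 j, hCdef, stepII_apply_zero, if_neg, zero_mul]
          exact fun h => hj (Fin.ext (by simpa using h))
        simp [this]
    · have h5 : (M 0 0).natDegree ≤ vecDegNat (M 0) :=
        Finset.le_sup (f := fun j => (M 0 j).natDegree) (Finset.mem_univ (0 : Fin (ℓ + 2)))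
      rwa [hM00, hGpow] at h5
  -- upper bound and attainment facts for rows of B
  have hub : ∀ (i : Fin (ℓ + 1)) (j : Fin (ℓ + 1)), B i j ≠ 0 →
      (B i j).natDegree + (j : ℕ) * (k - 1) ≤ d i := by
    intro i j hj
    have h1 : (BW i j).natDegree ≤ d i :=
      Finset.le_sup (f := fun j => (BW i j).natDegree) (Finset.mem_univ j)
    rwa [hBW i j, Polynomial.natDegree_mul hj (hXe _), Polynomial.natDegree_X_pow] at h1
  have hex : ∀ i : Fin (ℓ + 1), ∃ j : Fin (ℓ + 1),
      B i j ≠ 0 ∧ (B i j).natDegree + (j : ℕ) * (k - 1) = d i := by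
    intro i
    obtain ⟨j0, hj0⟩ := hrowBW i
    obtain ⟨j, hjne, -, hjnat⟩ := row_max (BW i) j0 hj0
    have hBij : B i j ≠ 0 := by
      intro hz
      rw [hBW i j, hz, zero_mul] at hjne
      exact hjne rfl
    refine ⟨j, hBij, ?_⟩
    rw [hBW i j, Polynomial.natDegree_mul hBij (hXe _), Polynomial.natDegree_X_pow] at hjnat
    exact hjnat
  -- rows i.succ of M
  have hrowsucc : ∀ i : Fin (ℓ + 1), vecDegNat (M i.succ) = d i + r := by
    intro i
    have hMs : ∀ j : Fin (ℓ + 2), M i.succ j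
        = (if hj : 1 ≤ (j : ℕ) then B i ⟨(j : ℕ) - 1, by have := j.isLt; omega⟩ else 0)
            * X ^ ((j : ℕ) * (k - 1))
          - R * ((if hj : (j : ℕ) < ℓ + 1 then B i ⟨(j : ℕ), hj⟩ else 0)
            * X ^ ((j : ℕ) * (k - 1))) := by
      intro j
      rw [hM i.succ j, hCdef, stepII_apply_succ ℓ s B R G i j]
      ring
    -- upper bound for each column
    have hubcol : ∀ j : Fin (ℓ + 2), (M i.succ j).natDegree ≤ d i + r := by
      intro j
      rw [hMs j]
      refine le_trans (Polynomial.natDegree_sub_le _ _) (max_le ?_ ?_)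
      · by_cases hj : 1 ≤ (j : ℕ)
        · rw [dif_pos hj]
          set jm1 : Fin (ℓ + 1) := ⟨(j : ℕ) - 1, by have := j.isLt; omega⟩ with hjm1
          by_cases hz : B i jm1 = 0
          · rw [hz, zero_mul]
            simp
          · rw [Polynomial.natDegree_mul hz (hXe _), Polynomial.natDegree_X_pow]
            have h1 : (B i jm1).natDegree + ((j : ℕ) - 1) * (k - 1) ≤ d i := hub i jm1 hz
            obtain ⟨t, ht⟩ : ∃ t, (j : ℕ) = t + 1 := ⟨(j : ℕ) - 1, by omega⟩
            rw [ht]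
            rw [ht] at h1
            simp only [Nat.add_sub_cancel] at h1
            have h2 : (t + 1) * (k - 1) = t * (k - 1) + (k - 1) := by ring
            rw [h2]
            set a1 := t * (k - 1)
            omega
        · rw [dif_neg hj, zero_mul]
          simp
      · by_cases hjq : (j : ℕ) < ℓ + 1
        · rw [dif_pos hjq]
          by_cases hz : B i ⟨(j : ℕ), hjq⟩ = 0
          · rw [hz, zero_mul, mul_zero]
            simp
          · rw [Polynomial.natDegree_mul hR0 (mul_ne_zero hz (hXe _)),
              Polynomial.natDegree_mul hz (hXe _), Polynomial.natDegree_X_pow]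
            have h1 := hub i ⟨(j : ℕ), hjq⟩ hz
            have h1' : (B i ⟨(j : ℕ), hjq⟩).natDegree + (j : ℕ) * (k - 1) ≤ d i := h1
            omega
        · rw [dif_neg hjq, zero_mul, mul_zero]
          simp
    -- attainment at the witness column
    obtain ⟨jst, hjstne, hjsteq⟩ := hex i
    set jc : Fin (ℓ + 2) := jst.castSucc with hjc
    have hjcv : (jc : ℕ) = (jst : ℕ) := rfl
    have hjclt : (jc : ℕ) < ℓ + 1 := by rw [hjcv]; exact jst.isLt
    have hQ : (⟨(jc : ℕ), hjclt⟩ : Fin (ℓ + 1)) = jst := by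
      simp [Fin.ext_iff, hjcv]
    have hRQ : R * (B i jst * X ^ ((jc : ℕ) * (k - 1))) ≠ 0 :=
      mul_ne_zero hR0 (mul_ne_zero hjstne (hXe _))
    have hRQdeg : (R * (B i jst * X ^ ((jc : ℕ) * (k - 1)))).degree = ((r + d i : ℕ) : WithBot ℕ) := by
      rw [Polynomial.degree_eq_natDegree hRQ,
        Polynomial.natDegree_mul hR0 (mul_ne_zero hjstne (hXe _)),
        Polynomial.natDegree_mul hjstne (hXe _), Polynomial.natDegree_X_pow, hjcv, hjsteq]
    have hPdeg : ((if hj : 1 ≤ (jc : ℕ) then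
          B i ⟨(jc : ℕ) - 1, by have := jc.isLt; omega⟩ else 0)
            * X ^ ((jc : ℕ) * (k - 1))).degree < ((r + d i : ℕ) : WithBot ℕ) := by
      by_cases hj : 1 ≤ (jc : ℕ)
      · rw [dif_pos hj]
        set jm1 : Fin (ℓ + 1) := ⟨(jc : ℕ) - 1, by have := jc.isLt; omega⟩ with hjm1
        by_cases hz : B i jm1 = 0
        · rw [hz, zero_mul, Polynomial.degree_zero]
          exact WithBot.bot_lt_coe _
        · rw [Polynomial.degree_eq_natDegree (mul_ne_zero hz (hXe _)),
            Polynomial.natDegree_mul hz (hXe _), Polynomial.natDegree_X_pow]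
          rw [Nat.cast_lt]
          have h1 : (B i jm1).natDegree + ((jc : ℕ) - 1) * (k - 1) ≤ d i := hub i jm1 hz
          obtain ⟨t, ht⟩ : ∃ t, (jc : ℕ) = t + 1 := ⟨(jc : ℕ) - 1, by omega⟩
          rw [ht]
          rw [ht] at h1
          simp only [Nat.add_sub_cancel] at h1
          have h2 : (t + 1) * (k - 1) = t * (k - 1) + (k - 1) := by ring
          rw [h2]
          set a1 := t * (k - 1)
          omega
      · rw [dif_neg hj, zero_mul, Polynomial.degree_zero]
        exact WithBot.bot_lt_coe _
    have hMdegc : (M i.succ jc).degree = ((r + d i : ℕ) : WithBot ℕ) := by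
      rw [hMs jc, dif_pos hjclt, hQ]
      rw [Polynomial.degree_sub_eq_right_of_degree_lt (by rw [hRQdeg]; exact hPdeg), hRQdeg]
    have hMne : M i.succ jc ≠ 0 := by
      intro hz
      rw [hz, Polynomial.degree_zero] at hMdegc
      exact absurd hMdegc.symm (by simp)
    have hMnat : (M i.succ jc).natDegree = r + d i := by
      have := Polynomial.degree_eq_natDegree hMne
      rw [hMdegc] at this
      exact_mod_cast this.symm
    refine le_antisymm (Finset.sup_le fun j _ => hubcol j) ?_
    have h6 : (M i.succ jc).natDegree ≤ vecDegNat (M i.succ) :=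
      Finset.le_sup (f := fun j => (M i.succ j).natDegree) (Finset.mem_univ jc)
    rw [hMnat] at h6
    omega
  -- sum of row degrees
  have hmatM : matDegNat M = (s + 1) * n + matDegNat BW + (ℓ + 1) * r := by
    have h1 : matDegNat M = vecDegNat (M 0) + ∑ i : Fin (ℓ + 1), vecDegNat (M i.succ) :=
      Fin.sum_univ_succ _
    rw [h1, hrow0, Finset.sum_congr rfl fun i _ => hrowsucc i, Finset.sum_add_distrib,
      Finset.sum_const, Finset.card_univ, Fintype.card_fin, smul_eq_mul]
    have h2 : matDegNat BW = ∑ i, d i := rfl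
    rw [h2]
    ring
  -- weight sums
  have hw21 : w2 = w1 + (ℓ + 1) * (k - 1) := by
    rw [hw2, Fin.sum_univ_castSucc]
    simp [hw1]
  -- final arithmetic
  constructor
  · have E3 : matDegNat BW = B.det.natDegree + w1 := by rw [← hBWdeg, hBWdetdeg]
    have E5 : (ℓ + 1) * (k - 1) + (ℓ + 1) * (r - k + 1) = (ℓ + 1) * r := by
      rw [← Nat.mul_add]
      congr 1
      omega
    rw [hmatM, hdetM, E3, hw21]
    set a1 := (s + 1) * n
    set a2 := (ℓ + 1) * r
    set a3 := (ℓ + 1) * (k - 1)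
    set a4 := (ℓ + 1) * (r - k + 1)
    omega
  · exact Nat.mul_le_mul_left _ (by omega)
end

section
/- Let B be a nonsingular square matrix over F_q[X] whose rows correspond to a basis of the module M_{s,ℓ}, with B·W_ℓ in weak Popov form, and suppose the permissible condition E(s,ℓ,τ) > 0 holds. Then the row of B of minimal (1,k−1)-weighted degree corresponds to a nonzero polynomial Q ∈ M_{s,ℓ} with weighted degree strictly less than s(n−τ). -/
open Polynomial

open scoped Classical

/-- The (1, k−1)-weighted degree of a bivariate polynomial `Q : F[X][Y]`:
the maximum of i + (k−1)·j over monomials X^i Y^j occurring in Q. -/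
noncomputable def wdeg {F : Type*} [Field F] (k : ℕ) (Q : Polynomial (Polynomial F)) : ℕ :=
  Q.support.sup fun j => (Q.coeff j).natDegree + (k - 1) * j

/-- Identify a row (b_0, …, b_ℓ) over F[X] with the bivariate polynomial Σ_t b_t(X) Y^t. -/
noncomputable def rowToPoly {F : Type*} [Field F] {ℓ : ℕ} (b : Fin (ℓ + 1) → Polynomial F) :
    Polynomial (Polynomial F) :=
  ∑ t, C (b t) * X ^ (t : ℕ)

/-- cast of Finset.sup into WithBot for nonempty sets -/
lemma sup_natCast {α : Type*} {S : Finset α} (hS : S.Nonempty) (f : α → ℕ) :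
    S.sup (fun a => ((f a : ℕ) : WithBot ℕ)) = ((S.sup f : ℕ) : WithBot ℕ) := by
  apply le_antisymm
  · exact Finset.sup_le fun a ha => by
      exact_mod_cast Nat.cast_le.mpr (Finset.le_sup (f := f) ha)
  · obtain ⟨a, ha, hsup⟩ := Finset.exists_mem_eq_sup S hS f
    rw [hsup]
    exact Finset.le_sup (f := fun a => ((f a : ℕ) : WithBot ℕ)) ha

lemma coeff_rowToPoly {F : Type*} [Field F] {ℓ : ℕ} (v : Fin (ℓ + 1) → Polynomial F) (t : ℕ) :
    (rowToPoly v).coeff t = if h : t < ℓ + 1 then v ⟨t, h⟩ else 0 := by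
  rw [rowToPoly]
  simp only [C_mul_X_pow_eq_monomial]
  rw [finset_sum_coeff]
  simp only [coeff_monomial]
  split_ifs with h
  · rw [Finset.sum_eq_single ⟨t, h⟩]
    · simp
    · intro b _ hb
      rw [if_neg]
      intro hbt
      exact hb (by ext; exact hbt)
    · simp
  · apply Finset.sum_eq_zero
    intro b _
    rw [if_neg]
    intro hbt
    exact h (hbt ▸ b.isLt)

lemma rowToPoly_ne_zero_iff {F : Type*} [Field F] {ℓ : ℕ} (v : Fin (ℓ + 1) → Polynomial F) :
    rowToPoly v ≠ 0 ↔ v ≠ 0 := by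
  constructor
  · intro h hv; apply h; rw [rowToPoly]; simp [hv]
  · intro h hQ
    apply h; funext t
    have := coeff_rowToPoly v (t : ℕ)
    rw [hQ] at this
    simpa [t.isLt, Fin.eta] using this.symm

lemma support_rowToPoly {F : Type*} [Field F] {ℓ : ℕ} (v : Fin (ℓ + 1) → Polynomial F) :
    (rowToPoly v).support =
      (Finset.univ.filter fun t : Fin (ℓ + 1) => v t ≠ 0).image Fin.val := by
  ext t
  simp only [mem_support_iff, Finset.mem_image, Finset.mem_filter, Finset.mem_univ, true_and,
    coeff_rowToPoly]
  constructor
  · intro h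
    split_ifs at h with ht
    · exact ⟨⟨t, ht⟩, h, rfl⟩
    · exact absurd rfl h
  · rintro ⟨a, ha, rfl⟩
    simpa [a.isLt, Fin.eta] using ha

lemma wdeg_rowToPoly {F : Type*} [Field F] {ℓ k : ℕ} (v : Fin (ℓ + 1) → Polynomial F) :
    wdeg k (rowToPoly v) =
      (Finset.univ.filter fun t : Fin (ℓ + 1) => v t ≠ 0).sup
        (fun t => (v t).natDegree + (k - 1) * (t : ℕ)) := by
  rw [wdeg, support_rowToPoly, Finset.sup_image]
  apply Finset.sup_congr rfl
  intro t ht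
  simp only [Function.comp, coeff_rowToPoly, t.isLt, dif_pos, Fin.eta]

/-- bridge: vecDeg of the weighted vector equals the weighted degree -/
lemma vecDeg_weighted_eq_wdeg {F : Type*} [Field F] {ℓ k : ℕ}
    (v : Fin (ℓ + 1) → Polynomial F) (hv : v ≠ 0) :
    vecDeg (fun t => v t * X ^ ((t : ℕ) * (k - 1))) =
      ((wdeg k (rowToPoly v) : ℕ) : WithBot ℕ) := by
  have hS : (Finset.univ.filter fun t : Fin (ℓ + 1) => v t ≠ 0).Nonempty := by
    obtain ⟨t, ht⟩ : ∃ t, v t ≠ 0 := by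
      by_contra h; push_neg at h; exact hv (funext h)
    exact ⟨t, by simp [ht]⟩
  rw [wdeg_rowToPoly, ← sup_natCast hS]
  rw [vecDeg]
  apply le_antisymm
  · apply Finset.sup_le
    intro t _
    by_cases ht : v t = 0
    · simp [ht]
    · have : (v t * X ^ ((t : ℕ) * (k - 1))).degree
          = (((v t).natDegree + (k - 1) * (t : ℕ) : ℕ) : WithBot ℕ) := by
        rw [degree_mul, degree_X_pow, degree_eq_natDegree ht]
        push_cast
        ring
      rw [this]
      exact Finset.le_sup (f := fun t => (((v t).natDegree + (k-1) * (t:ℕ) : ℕ) : WithBot ℕ))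
        (by simp [ht])
  · apply Finset.sup_le
    intro t ht
    simp only [Finset.mem_filter] at ht
    have : (v t * X ^ ((t : ℕ) * (k - 1))).degree
        = (((v t).natDegree + (k - 1) * (t : ℕ) : ℕ) : WithBot ℕ) := by
      rw [degree_mul, degree_X_pow, degree_eq_natDegree ht.2]
      push_cast
      ring
    rw [← this]
    exact Finset.le_sup (f := fun j => (v j * X ^ ((j : ℕ) * (k - 1))).degree)
      (Finset.mem_univ t)

lemma degree_le_vecDeg {F : Type*} [Field F] {m : ℕ} (v : Fin m → Polynomial F) (j : Fin m) :
    (v j).degree ≤ vecDeg v := by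
  rw [vecDeg]; exact Finset.le_sup (f := fun j => (v j).degree) (Finset.mem_univ j)

/-- For a nonzero vector, the `leadPos` is attained and maximal. -/
lemma exists_leadPos {F : Type*} [Field F] {m : ℕ} (v : Fin m → Polynomial F) (hv : v ≠ 0) :
    ∃ p : Fin m, (p : ℕ) = leadPos v ∧ (v p).degree = vecDeg v ∧
      ∀ q : Fin m, (leadPos v : ℕ) < (q : ℕ) → (v q).degree < vecDeg v := by
  obtain ⟨t, ht⟩ : ∃ t, v t ≠ 0 := by
    by_contra h; push_neg at h; exact hv (funext h)
  have hbot : vecDeg v ≠ ⊥ := by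
    intro h
    have := degree_le_vecDeg v t
    rw [h, le_bot_iff, degree_eq_bot] at this
    exact ht this
  have hne : (Finset.univ.filter fun j : Fin m => (v j).degree = vecDeg v).Nonempty := by
    obtain ⟨j, _, hj⟩ := Finset.exists_mem_eq_sup Finset.univ
      (⟨t, Finset.mem_univ t⟩) (fun j => (v j).degree)
    exact ⟨j, Finset.mem_filter.mpr ⟨Finset.mem_univ _, hj.symm⟩⟩
  have hlead : ∀ w : Fin m → Polynomial F,
      leadPos w = (Finset.univ.filter fun j : Fin m => (w j).degree = vecDeg w).sup
        (fun j : Fin m => (j : ℕ)) := fun _ => rfl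
  obtain ⟨p, hp, hsup⟩ := Finset.exists_mem_eq_sup _ hne (fun j : Fin m => (j : ℕ))
  simp only [Finset.mem_filter, Finset.mem_univ, true_and] at hp
  refine ⟨p, by rw [hlead, hsup], hp, ?_⟩
  intro q hq
  rcases lt_or_eq_of_le (degree_le_vecDeg v q) with h | h
  · exact h
  · exfalso
    have hqmem : q ∈ Finset.univ.filter fun j : Fin m => (v j).degree = vecDeg v := by
      simp [h]
    have h4 : (q : ℕ) ≤ leadPos v := by
      rw [hlead]; exact Finset.le_sup (f := fun j : Fin m => (j : ℕ)) hqmem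
    omega

/-- Predictable degree lemma for weak Popov matrices. -/
lemma weakPopov_min {F : Type*} [Field F] {m : ℕ} (M : Matrix (Fin m) (Fin m) (Polynomial F))
    (hWP : WeakPopov M) (hrows : ∀ i, M i ≠ 0) (c : Fin m → Polynomial F) (hc : c ≠ 0) :
    ∃ j, c j ≠ 0 ∧ vecDeg (M j) ≤ vecDeg (fun t => ∑ i, c i * M i t) := by
  obtain ⟨j₀, hj₀⟩ : ∃ j, c j ≠ 0 := by
    by_contra h; push_neg at h; exact hc (funext h)
  set d : WithBot ℕ := Finset.univ.sup (fun j => (c j).degree + vecDeg (M j)) with hd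
  have hdbot : ⊥ < d := by
    have h1 : (0 : WithBot ℕ) ≤ (c j₀).degree := zero_le_degree_iff.mpr hj₀
    obtain ⟨t, ht⟩ : ∃ t, M j₀ t ≠ 0 := by
      by_contra h; push_neg at h; exact hrows j₀ (funext h)
    have h2 : (0 : WithBot ℕ) ≤ vecDeg (M j₀) :=
      le_trans (zero_le_degree_iff.mpr ht) (degree_le_vecDeg _ t)
    calc (⊥ : WithBot ℕ) < 0 := by decide
    _ ≤ (c j₀).degree + vecDeg (M j₀) := add_nonneg h1 h2
    _ ≤ d := Finset.le_sup (f := fun j => (c j).degree + vecDeg (M j)) (Finset.mem_univ j₀)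
  -- the set of maximizers
  set S := Finset.univ.filter (fun j : Fin m => (c j).degree + vecDeg (M j) = d) with hS
  have hSne : S.Nonempty := by
    obtain ⟨j, _, hj⟩ := Finset.exists_mem_eq_sup Finset.univ ⟨j₀, Finset.mem_univ j₀⟩
      (fun j => (c j).degree + vecDeg (M j))
    exact ⟨j, by rw [hS]; exact Finset.mem_filter.mpr ⟨Finset.mem_univ _, hj.symm.trans hd.symm⟩⟩
  obtain ⟨j', hj'S, hj'max⟩ := Finset.exists_max_image S (fun j => leadPos (M j)) hSne
  have hj'd : (c j').degree + vecDeg (M j') = d := (Finset.mem_filter.mp hj'S).2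
  have hcj' : c j' ≠ 0 := by
    intro h
    rw [h, degree_zero, WithBot.bot_add] at hj'd
    exact absurd hj'd.symm (ne_of_gt hdbot)
  obtain ⟨p, hpval, hpdeg, hpmax⟩ := exists_leadPos (M j') (hrows j')
  refine ⟨j', hcj', ?_⟩
  -- compute the degree of the combination at column p
  have key : (∑ i, c i * M i p).degree = d := by
    rw [← Finset.add_sum_erase _ _ (Finset.mem_univ j')]
    have h1 : (c j' * M j' p).degree = d := by
      rw [degree_mul, hpdeg, hj'd]
    rw [← h1]
    apply degree_add_eq_left_of_degree_lt
    rw [h1]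
    apply lt_of_le_of_lt (degree_sum_le _ _)
    rw [Finset.sup_lt_iff hdbot]
    intro i hi
    rw [Finset.mem_erase] at hi
    by_cases hiS : i ∈ S
    · -- maximizer with smaller leadPos: strict at column p
      have hld : leadPos (M i) ≠ leadPos (M j') := fun h => hi.1 (hWP h)
      have hle : leadPos (M i) ≤ leadPos (M j') := hj'max i hiS
      have hlt : leadPos (M i) < leadPos (M j') := lt_of_le_of_ne hle hld
      have hstrict : (M i p).degree < vecDeg (M i) := by
        rcases lt_or_eq_of_le (degree_le_vecDeg (M i) p) with h | h
        · exact h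
        · exfalso
          have hpmem : p ∈ Finset.univ.filter fun q : Fin m => (M i q).degree = vecDeg (M i) := by
            simp [h]
          have hlead : leadPos (M i) = (Finset.univ.filter fun q : Fin m =>
              (M i q).degree = vecDeg (M i)).sup (fun q : Fin m => (q : ℕ)) := rfl
          have h5 : (p : ℕ) ≤ leadPos (M i) := by
            rw [hlead]; exact Finset.le_sup (f := fun q : Fin m => (q : ℕ)) hpmem
          omega
      by_cases hci : c i = 0
      · simpa [hci] using hdbot
      calc (c i * M i p).degree = (c i).degree + (M i p).degree := degree_mul
      _ < (c i).degree + vecDeg (M i) :=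
          WithBot.add_lt_add_left (degree_ne_bot.mpr hci) hstrict
      _ ≤ d := Finset.le_sup (f := fun j => (c j).degree + vecDeg (M j)) (Finset.mem_univ i)
    · -- non-maximizer
      have h2 : (c i).degree + vecDeg (M i) < d := by
        have hle2 : (c i).degree + vecDeg (M i) ≤ d :=
          Finset.le_sup (f := fun j => (c j).degree + vecDeg (M j)) (Finset.mem_univ i)
        refine lt_of_le_of_ne hle2 ?_
        intro h
        exact hiS (by simp [hS, h])
      calc (c i * M i p).degree = (c i).degree + (M i p).degree := degree_mul
      _ ≤ (c i).degree + vecDeg (M i) := by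
          exact add_le_add le_rfl (degree_le_vecDeg (M i) p)
      _ < d := h2
  calc vecDeg (M j') ≤ (c j').degree + vecDeg (M j') := le_add_of_nonneg_left
        (zero_le_degree_iff.mpr hcj')
  _ = d := hj'd
  _ = (∑ i, c i * M i p).degree := key.symm
  _ ≤ vecDeg (fun t => ∑ i, c i * M i t) :=
      degree_le_vecDeg (fun t => ∑ i, c i * M i t) p

lemma sum_range_sub_eq (s : ℕ) :
    ∑ i ∈ Finset.range s, (s - i) = ∑ i ∈ Finset.range (s + 1), i := by
  induction s with
  | zero => simp
  | succ s ih =>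
    have h1 : ∑ i ∈ Finset.range (s + 1), (s + 1 - i)
        = (∑ i ∈ Finset.range s, (s - i)) + (s + 1) := by
      rw [Finset.sum_range_succ]
      have h2 : ∑ i ∈ Finset.range s, (s + 1 - i) = ∑ i ∈ Finset.range s, ((s - i) + 1) := by
        apply Finset.sum_congr rfl
        intro i hi
        rw [Finset.mem_range] at hi
        omega
      rw [h2, Finset.sum_add_distrib, Finset.sum_const, Finset.card_range, smul_eq_mul,
        mul_one]
      omega
    rw [h1, ih, Finset.sum_range_succ (fun i => i) (s + 1)]

lemma gauss_choose (a : ℕ) : ∑ i ∈ Finset.range (a + 1), i = (a + 1).choose 2 := by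
  have h : (∑ i ∈ Finset.range (a + 1), i) * 2 = (a + 1) * a := by
    simpa using Finset.sum_range_id_mul_two (a + 1)
  have h2 : (a + 1).choose 2 = (a + 1) * a / 2 := by
    rw [Nat.choose_two_right]; simp
  set t := (a + 1) * a with ht
  omega

lemma shiftXY_sub {F : Type*} [Field F] (P P' : Polynomial (Polynomial F)) (a b : F) :
    shiftXY (P - P') a b = shiftXY P a b - shiftXY P' a b := by
  unfold shiftXY
  rw [Polynomial.map_sub, sub_comp]

lemma exists_low_wdeg {F : Type*} [Field F] [Fintype F] {n k s ℓ τ : ℕ}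
    (hk : 1 ≤ k) (hs : 1 ≤ s) (hτ : τ < n) (α r' : Fin n → F)
    (hE : 0 < (ℓ + 1 : ℤ) * s * ((n : ℤ) - τ)
        - ((ℓ + 1).choose 2 : ℤ) * ((k : ℤ) - 1)
        - ((s + 1).choose 2 : ℤ) * n) :
    ∃ Q : Polynomial (Polynomial F), Q ≠ 0 ∧ Q ∈ InterpSet α r' s ℓ ∧
      wdeg k Q < s * (n - τ) := by
  classical
  set A : ℕ := s * (n - τ) with hA
  have hA1 : 1 ≤ A := by
    have : 1 ≤ n - τ := by omega
    calc 1 = 1 * 1 := (one_mul 1).symm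
    _ ≤ s * (n - τ) := Nat.mul_le_mul hs this
  set m : Fin (ℓ + 1) → ℕ := fun j => A - (k - 1) * (j : ℕ) with hm
  set Φ : ((Σ j : Fin (ℓ + 1), Fin (m j)) → F) → Polynomial (Polynomial F) :=
    fun c => ∑ x : Σ j : Fin (ℓ + 1), Fin (m j),
      C ((Polynomial.monomial (x.2 : ℕ)) (c x)) * X ^ (x.1 : ℕ) with hΦ
  -- inner coefficient computation
  have hcoeff : ∀ c t i, ((Φ c).coeff t).coeff i =
      ∑ x : Σ j : Fin (ℓ + 1), Fin (m j),
        if (x.1 : ℕ) = t then (if (x.2 : ℕ) = i then c x else 0) else 0 := by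
    intro c t i
    rw [hΦ]
    simp only [C_mul_X_pow_eq_monomial]
    rw [finset_sum_coeff]
    simp only [coeff_monomial]
    rw [finset_sum_coeff]
    apply Finset.sum_congr rfl
    intro x _
    rw [apply_ite (fun q : Polynomial F => q.coeff i), coeff_monomial, coeff_zero]
  have hcoeff_at : ∀ c (x : Σ j : Fin (ℓ + 1), Fin (m j)),
      ((Φ c).coeff (x.1 : ℕ)).coeff (x.2 : ℕ) = c x := by
    intro c x
    rw [hcoeff]
    rw [Finset.sum_eq_single x]
    · simp
    · intro x' _ hx'
      split_ifs with h1 h2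
      · exfalso
        apply hx'
        have he1 : x'.1 = x.1 := Fin.ext h1
        refine Sigma.ext he1 ?_
        rw [Fin.heq_ext_iff (congrArg (fun j => m j) he1)]
        exact h2
      · rfl
      · rfl
    · simp
  have hcoeff_hi : ∀ c t i, (ℓ + 1 ≤ t ∨ A - (k - 1) * t ≤ i) →
      ((Φ c).coeff t).coeff i = 0 := by
    intro c t i hti
    rw [hcoeff]
    apply Finset.sum_eq_zero
    intro x _
    split_ifs with h1 h2
    · exfalso
      rcases hti with h | h
      · have := x.1.isLt; omega
      · have h3 : (x.2 : ℕ) < A - (k - 1) * (x.1 : ℕ) := x.2.isLt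
        subst h1
        omega
    · rfl
    · rfl
  have houter : ∀ c t, ℓ + 1 ≤ t → (Φ c).coeff t = 0 := by
    intro c t ht
    ext i
    rw [hcoeff_hi c t i (Or.inl ht), coeff_zero]
  -- cardinalities
  have hcard1 : Fintype.card (Σ j : Fin (ℓ + 1), Fin (m j)) = ∑ j : Fin (ℓ + 1), m j := by
    simp [Fintype.card_sigma]
  have hcard2 : Fintype.card (Fin n × Σ i : Fin s, Fin (s - (i : ℕ)))
      = n * ((s + 1).choose 2) := by
    simp only [Fintype.card_prod, Fintype.card_fin, Fintype.card_sigma]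
    congr 1
    rw [Fin.sum_univ_eq_sum_range (fun i => s - i) s, sum_range_sub_eq, gauss_choose]
  have hgauss : (∑ j : Fin (ℓ + 1), ((j : ℕ) : ℤ)) = ((ℓ + 1).choose 2 : ℤ) := by
    have : (∑ j : Fin (ℓ + 1), (j : ℕ)) = (ℓ + 1).choose 2 := by
      rw [Fin.sum_univ_eq_sum_range (fun i => i) (ℓ + 1), gauss_choose]
    exact_mod_cast congrArg (Nat.cast : ℕ → ℤ) this
  have hkey : n * ((s + 1).choose 2) < ∑ j : Fin (ℓ + 1), m j := by
    have h1 : ∀ j : Fin (ℓ + 1), (A : ℤ) - ((k - 1 : ℕ) : ℤ) * ((j : ℕ) : ℤ) ≤ ((m j : ℕ) : ℤ) := by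
      intro j
      have hb : (A : ℤ) - (((k - 1) * (j : ℕ) : ℕ) : ℤ) ≤ ((A - (k - 1) * (j : ℕ) : ℕ) : ℤ) := by
        generalize (k - 1) * (j : ℕ) = b
        omega
      have hm' : ((m j : ℕ) : ℤ) = ((A - (k - 1) * (j : ℕ) : ℕ) : ℤ) := rfl
      rw [hm']
      refine le_trans (le_of_eq ?_) hb
      push_cast
      ring
    have h2 : (∑ j : Fin (ℓ + 1), ((A : ℤ) - ((k - 1 : ℕ) : ℤ) * ((j : ℕ) : ℤ)))
        ≤ ∑ j : Fin (ℓ + 1), ((m j : ℕ) : ℤ) := Finset.sum_le_sum fun j _ => h1 j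
    have h3 : (∑ j : Fin (ℓ + 1), ((A : ℤ) - ((k - 1 : ℕ) : ℤ) * ((j : ℕ) : ℤ)))
        = (ℓ + 1 : ℤ) * A - ((k - 1 : ℕ) : ℤ) * ((ℓ + 1).choose 2 : ℤ) := by
      rw [Finset.sum_sub_distrib, Finset.sum_const, ← Finset.mul_sum, hgauss]
      simp [mul_comm]
    have h4 : ((k - 1 : ℕ) : ℤ) = (k : ℤ) - 1 := by
      omega
    have h5 : ((A : ℕ) : ℤ) = (s : ℤ) * ((n : ℤ) - τ) := by
      rw [hA]
      push_cast [Nat.cast_sub hτ.le]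
      ring
    rw [h3, h4, h5] at h2
    have h6 : (((s + 1).choose 2 : ℕ) : ℤ) * n < ∑ j : Fin (ℓ + 1), ((m j : ℕ) : ℤ) := by
      nlinarith [hE, h2]
    have h7 : ((n * ((s + 1).choose 2) : ℕ) : ℤ) < ((∑ j : Fin (ℓ + 1), m j : ℕ) : ℤ) := by
      push_cast
      linarith [h6]
    exact_mod_cast h7
  -- pigeonhole
  set κ := Fin n × Σ i : Fin s, Fin (s - (i : ℕ)) with hκ
  set Ψ : Polynomial (Polynomial F) → (κ → F) :=
    fun Q pq => ((shiftXY Q (α pq.1) (r' pq.1)).coeff (pq.2.2 : ℕ)).coeff (pq.2.1 : ℕ) with hΨ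
  have hcards : Fintype.card (κ → F)
      < Fintype.card ((Σ j : Fin (ℓ + 1), Fin (m j)) → F) := by
    rw [Fintype.card_fun, Fintype.card_fun, hcard1, hcard2]
    exact Nat.pow_lt_pow_right Fintype.one_lt_card hkey
  obtain ⟨c₁, c₂, hne, heq⟩ := Fintype.exists_ne_map_eq_of_card_lt
    (fun c : (Σ j : Fin (ℓ + 1), Fin (m j)) → F => Ψ (Φ c)) hcards
  set c := c₁ - c₂ with hc
  have hcne : c ≠ 0 := sub_ne_zero.mpr hne
  have hΦsub : Φ c = Φ c₁ - Φ c₂ := by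
    rw [hΦ]
    simp only
    rw [← Finset.sum_sub_distrib]
    apply Finset.sum_congr rfl
    intro x _
    rw [← sub_mul, ← C_sub, ← map_sub]
    rfl
  refine ⟨Φ c, ?_, ⟨?_, ?_⟩, ?_⟩
  · -- nonzero
    intro h
    obtain ⟨x, hx⟩ : ∃ x, c x ≠ 0 := by
      by_contra hcon; push_neg at hcon; exact hcne (funext hcon)
    apply hx
    rw [← hcoeff_at c x, h]
    simp
  · -- natDegree ≤ ℓ
    rw [natDegree_le_iff_coeff_eq_zero]
    intro N hN
    exact houter c N (by omega)
  · -- multiplicity conditions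
    intro p i j hij
    have hi : i < s := by omega
    have hj : j < s - i := by omega
    have hpoint := congrFun heq (p, ⟨⟨i, hi⟩, ⟨j, hj⟩⟩)
    simp only [hΨ] at hpoint
    rw [hΦsub, shiftXY_sub, coeff_sub, coeff_sub, sub_eq_zero]
    exact hpoint
  · -- weighted degree bound
    rw [wdeg]
    have hbot : (⊥ : ℕ) < A := by
      rw [Nat.bot_eq_zero]; omega
    rw [Finset.sup_lt_iff hbot]
    intro j hj
    rw [mem_support_iff] at hj
    have hjℓ : j < ℓ + 1 := by
      by_contra hcon
      exact hj (houter c j (by omega))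
    have hmj1 : 1 ≤ A - (k - 1) * j := by
      by_contra hcon
      apply hj
      ext i
      rw [hcoeff_hi c j i (Or.inr (by omega)), coeff_zero]
    have hnd : ((Φ c).coeff j).natDegree ≤ A - (k - 1) * j - 1 := by
      rw [natDegree_le_iff_coeff_eq_zero]
      intro N hN
      exact hcoeff_hi c j N (Or.inr (by omega))
    have hfin : ((Φ c).coeff j).natDegree + (k - 1) * j < A := by
      set B := (k - 1) * j with hB
      omega
    exact hfin

lemma rowToPoly_comb {F : Type*} [Field F] {ℓ : ℕ} (c : Fin (ℓ + 1) → Polynomial F)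
    (B : Matrix (Fin (ℓ + 1)) (Fin (ℓ + 1)) (Polynomial F)) :
    ∑ j, c j • rowToPoly (B j) = rowToPoly (fun t => ∑ j, c j * B j t) := by
  simp only [rowToPoly, smul_eq_C_mul, Finset.mul_sum, map_sum, Finset.sum_mul]
  rw [Finset.sum_comm]
  apply Finset.sum_congr rfl
  intro t _
  apply Finset.sum_congr rfl
  intro j _
  rw [C_mul]
  ring


/-- If the rows of B form a basis of M_{s,ℓ}, B·W_ℓ is in weak Popov form,
and E(s,ℓ,τ) > 0, then the row of B of minimal (1,k−1)-weighted degree corresponds to a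
nonzero polynomial Q ∈ M_{s,ℓ} with weighted degree strictly less than s(n−τ). -/
theorem statement18 {F : Type*} [Field F] [Fintype F] {n k s ℓ τ : ℕ}
    (hk : 1 ≤ k) (hkn : k ≤ n) (hs : 1 ≤ s) (hsℓ : s ≤ ℓ) (hτ : τ < n)
    (α : Fin n → F) (hα : Function.Injective α) (r' : Fin n → F)
    (hE : 0 < (ℓ + 1 : ℤ) * s * ((n : ℤ) - τ)
        - ((ℓ + 1).choose 2 : ℤ) * ((k : ℤ) - 1)
        - ((s + 1).choose 2 : ℤ) * n)
    (B : Matrix (Fin (ℓ + 1)) (Fin (ℓ + 1)) (Polynomial F)) (hB : B.det ≠ 0)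
    (hbasis : IsBasisOfInterp α r' s ℓ (fun i => rowToPoly (B i)))
    (hWP : WeakPopov (B * Wmat F k ℓ)) :
    ∃ i, rowToPoly (B i) ≠ 0 ∧ rowToPoly (B i) ∈ InterpSet α r' s ℓ ∧
      wdeg k (rowToPoly (B i)) < s * (n - τ) ∧
      ∀ Q ∈ InterpSet α r' s ℓ, Q ≠ 0 →
        wdeg k (rowToPoly (B i)) ≤ wdeg k Q := by
  classical
  have hrows_ne : ∀ i, rowToPoly (B i) ≠ 0 := fun i => hbasis.1.ne_zero i
  have hBne : ∀ i, B i ≠ 0 := fun i => (rowToPoly_ne_zero_iff (B i)).mp (hrows_ne i)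
  set M := B * Wmat F k ℓ with hM
  have hMentry : ∀ i t, M i t = B i t * X ^ ((t : ℕ) * (k - 1)) := by
    intro i t
    rw [hM, Wmat, Matrix.mul_diagonal]
  have hMfun : ∀ i, M i = fun t => B i t * X ^ ((t : ℕ) * (k - 1)) :=
    fun i => funext fun t => hMentry i t
  have hMrow : ∀ i, M i ≠ 0 := by
    intro i h
    apply hBne i
    funext t
    have := congrFun h t
    rw [hMentry] at this
    rcases mul_eq_zero.mp this with h1 | h1
    · exact h1
    · exact absurd h1 (pow_ne_zero _ X_ne_zero)
  have hMdeg : ∀ i, vecDeg (M i) = ((wdeg k (rowToPoly (B i)) : ℕ) : WithBot ℕ) := by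
    intro i
    rw [hMfun i]
    exact vecDeg_weighted_eq_wdeg (B i) (hBne i)
  obtain ⟨i₀, _, hi₀⟩ := Finset.exists_min_image Finset.univ
    (fun i => wdeg k (rowToPoly (B i))) Finset.univ_nonempty
  have hmem : ∀ i, rowToPoly (B i) ∈ InterpSet α r' s ℓ := by
    intro i
    have h1 : rowToPoly (B i) ∈
        (Submodule.span (Polynomial F) (Set.range fun i => rowToPoly (B i)) :
          Set (Polynomial (Polynomial F))) :=
      Submodule.subset_span (Set.mem_range_self i)
    rw [hbasis.2] at h1
    exact h1
  have hminQ : ∀ Q ∈ InterpSet α r' s ℓ, Q ≠ 0 → wdeg k (rowToPoly (B i₀)) ≤ wdeg k Q := by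
    intro Q hQ hQ0
    have hQspan : Q ∈ Submodule.span (Polynomial F) (Set.range fun i => rowToPoly (B i)) := by
      have : Q ∈ (Submodule.span (Polynomial F) (Set.range fun i => rowToPoly (B i)) :
          Set (Polynomial (Polynomial F))) := by
        rw [hbasis.2]; exact hQ
      exact this
    obtain ⟨c, hc⟩ := (Submodule.mem_span_range_iff_exists_fun (Polynomial F)).mp hQspan
    have hcne : c ≠ 0 := by
      intro h
      rw [h] at hc
      simp only [Pi.zero_apply, zero_smul, Finset.sum_const_zero] at hc
      exact hQ0 hc.symm
    have hQrow : rowToPoly (fun t => ∑ j, c j * B j t) = Q := by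
      rw [← rowToPoly_comb]; exact hc
    have hvne : (fun t => ∑ j, c j * B j t) ≠ 0 :=
      (rowToPoly_ne_zero_iff _).mp (by rw [hQrow]; exact hQ0)
    obtain ⟨j', hcj', hle⟩ := weakPopov_min M hWP hMrow c hcne
    have hMc : (fun t => ∑ i, c i * M i t)
        = fun t => (∑ j, c j * B j t) * X ^ ((t : ℕ) * (k - 1)) := by
      funext t
      rw [Finset.sum_mul]
      apply Finset.sum_congr rfl
      intro i _
      rw [hMentry]
      ring
    have h2 : vecDeg (fun t => ∑ i, c i * M i t) = ((wdeg k Q : ℕ) : WithBot ℕ) := by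
      rw [hMc, vecDeg_weighted_eq_wdeg _ hvne, hQrow]
    rw [hMdeg j', h2] at hle
    have h3 : wdeg k (rowToPoly (B j')) ≤ wdeg k Q := by exact_mod_cast hle
    exact le_trans (hi₀ j' (Finset.mem_univ _)) h3
  obtain ⟨Qe, hQe0, hQem, hQew⟩ := exists_low_wdeg hk hs hτ α r' hE
  exact ⟨i₀, hrows_ne i₀, hmem i₀, lt_of_le_of_lt (hminQ Qe hQem hQe0) hQew, hminQ⟩
end
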